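/- The set of states indexed by I ⊆ {1,…,n} forms a subsystem (f_I ∘ P_I = P_I ∘ f) if and only if I is 'closed under predecessors' in the sparsity graph: whenever j ∈ I and f_j depends on x_i, then i ∈ I. Consequently, for each node x_j, the past P(x_j) induces the smallest subsystem containing x_j. -/
import Mathlib


/-- Direct dependence: `f_j` depends on the block `x_i` (is not constant in it). -/
def BlockDep (N : ℕ) (d : Fin N → ℕ)
    (f : ∀ j : Fin N, (∀ k, Fin (d k) → ℝ) → (Fin (d j) → ℝ)) (i j : Fin N) : Prop :=
  ∃ x y : ∀ k, Fin (d k) → ℝ, (∀ k, k ≠ i → x k = y k) ∧ f j x ≠ f j y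

/-- `I` induces a subsystem: the components `f_I` depend only on the variables `x_I`
(`f_I ∘ P_I = P_I ∘ f`). -/
def IsSubsystem (N : ℕ) (d : Fin N → ℕ)
    (f : ∀ j : Fin N, (∀ k, Fin (d k) → ℝ) → (Fin (d j) → ℝ)) (I : Set (Fin N)) : Prop :=
  ∀ x y : ∀ k, Fin (d k) → ℝ, (∀ j ∈ I, x j = y j) → ∀ j ∈ I, f j x = f j y

lemma subsystem_iff_aux (N : ℕ) (d : Fin N → ℕ)
    (f : ∀ j : Fin N, (∀ k, Fin (d k) → ℝ) → (Fin (d j) → ℝ)) (I : Set (Fin N)) :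
    IsSubsystem N d f I ↔ ∀ j ∈ I, ∀ i, BlockDep N d f i j → i ∈ I := by
  constructor
  · intro hsub j hj i hdep
    by_contra hi
    obtain ⟨x, y, hxy, hne⟩ := hdep
    exact hne (hsub x y (fun k hk => hxy k (fun h => hi (h ▸ hk))) j hj)
  · intro hcl x y hxy j hj
    -- interpolate via finsets
    have key : ∀ S : Finset (Fin N),
        f j (fun k => if k ∈ S then y k else x k) = f j x := by
      intro S
      induction S using Finset.induction_on with
      | empty => simp
      | @insert i S hiS ih =>
        rw [← ih]
        by_cases hiI : i ∈ I
        · have harg : (fun k => if k ∈ insert i S then y k else x k)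
              = (fun k => if k ∈ S then y k else x k) := by
            funext k
            by_cases hk : k = i
            · subst hk
              simp [hiS, hxy k hiI]
            · simp [Finset.mem_insert, hk]
          rw [harg]
        · by_contra hne
          exact hiI (hcl j hj i ⟨_, _, fun k hk => by simp [Finset.mem_insert, hk], hne⟩)
    have h1 := key Finset.univ
    simpa using h1.symm

/-- `I` induces a subsystem iff `I` is closed under predecessors in the
sparsity graph; consequently, for every node `j` the past `P(x_j)` induces the smallest
subsystem containing `j`. -/
theorem subsystem_iff_closed_under_predecessors (N : ℕ) (d : Fin N → ℕ)
    (f : ∀ j : Fin N, (∀ k, Fin (d k) → ℝ) → (Fin (d j) → ℝ)) :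
    (∀ I : Set (Fin N),
      IsSubsystem N d f I ↔ ∀ j ∈ I, ∀ i, BlockDep N d f i j → i ∈ I) ∧
    (∀ j : Fin N,
      IsSubsystem N d f {i | Relation.ReflTransGen (BlockDep N d f) i j} ∧
      j ∈ {i | Relation.ReflTransGen (BlockDep N d f) i j} ∧
      ∀ I : Set (Fin N), IsSubsystem N d f I → j ∈ I →
        {i | Relation.ReflTransGen (BlockDep N d f) i j} ⊆ I) := by
  refine ⟨subsystem_iff_aux N d f, fun j => ⟨?_, Relation.ReflTransGen.refl, ?_⟩⟩
  · rw [subsystem_iff_aux]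
    intro j' hj' i hdep
    exact Relation.ReflTransGen.head hdep hj'
  · intro I hI hjI i hi
    have hcl := (subsystem_iff_aux N d f I).mp hI
    induction hi using Relation.ReflTransGen.head_induction_on with
    | refl => exact hjI
    | head h _ ih => exact hcl _ ih _ h
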